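/- arXiv:2404.16321 — 2 statements merged into one kernel-verified Lean document; each statement's English description precedes it below -/
import Mathlib

section
/- The inclusion of the wide subcategory Poly_Cart of polynomial functors and cartesian maps into Poly reflects all colimits: if a cocone in Poly_Cart becomes a colimit cocone in Poly, then it is a colimit cocone in Poly_Cart. -/
universe v u

open CategoryTheory Limits

/-- A morphism of polynomial functors: forwards on positions, backwards on directions. -/
structure PolyHom (p q : PFunctor.{u}) : Type u where
  onPos : p.A → q.A
  onDir : ∀ a : p.A, q.B (onPos a) → p.B a

/-- The category `Poly` of polynomial endofunctors on `Set` and natural transformations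
between them (presented position/direction-wise). -/
instance : Category PFunctor.{u} where
  Hom := PolyHom
  id p := ⟨fun a => a, fun _ d => d⟩
  comp φ ψ := ⟨fun a => ψ.onPos (φ.onPos a), fun a d => φ.onDir a (ψ.onDir (φ.onPos a) d)⟩
  id_comp _ := rfl
  comp_id _ := rfl
  assoc _ _ _ := rfl

/-- Post-composition `q ↦ p ◁ q` with a fixed polynomial `p`, as a functor `Poly ⥤ Poly`.
(`PFunctor.comp p q` is the composite functor `p ∘ q`.) -/
def compL (p : PFunctor.{u}) : PFunctor.{u} ⥤ PFunctor.{u} where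
  obj q := p.comp q
  map φ :=
    { onPos := fun x => ⟨x.1, fun b => φ.onPos (x.2 b)⟩
      onDir := fun x d => ⟨d.1, φ.onDir (x.2 d.1) d.2⟩ }
  map_id _ := rfl
  map_comp _ _ := rfl

/-- Pre-composition `p ↦ p ◁ q` with a fixed polynomial `q`, as a functor `Poly ⥤ Poly`. -/
def compR (q : PFunctor.{u}) : PFunctor.{u} ⥤ PFunctor.{u} where
  obj p := p.comp q
  map φ :=
    { onPos := fun x => ⟨φ.onPos x.1, fun b => x.2 (φ.onDir x.1 b)⟩
      onDir := fun x d => ⟨φ.onDir x.1 d.1, d.2⟩ }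
  map_id _ := rfl
  map_comp _ _ := rfl

/-- Evaluation of polynomial functors at a set `X`, as a functor `Poly ⥤ Set`. -/
def evalPoly (X : Type u) : PFunctor.{u} ⥤ Type u where
  obj p := p.Obj X
  map φ := TypeCat.ofHom fun x => ⟨φ.onPos x.1, fun d => x.2 (φ.onDir x.1 d)⟩
  map_id _ := rfl
  map_comp _ _ := rfl

/-- A map of polynomial functors is cartesian if all the backwards maps on directions
are bijections (equivalently, all naturality squares are pullbacks). -/
def IsCartesian {p q : PFunctor.{u}} (φ : p ⟶ q) : Prop :=
  ∀ a, Function.Bijective (φ.onDir a)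

/-- The wide subcategory `Poly_Cart` of polynomial functors and cartesian maps. -/
def PolyCart : Type (u + 1) := PFunctor.{u}

instance : Category PolyCart.{u} where
  Hom p q := { φ : (show PFunctor.{u} from p) ⟶ (show PFunctor.{u} from q) // IsCartesian φ }
  id p := ⟨𝟙 _, fun _ => Function.bijective_id⟩
  comp φ ψ := ⟨φ.1 ≫ ψ.1, fun a => (φ.2 a).comp (ψ.2 (φ.1.onPos a))⟩
  id_comp _ := rfl
  comp_id _ := rfl
  assoc _ _ _ := rfl

/-- The inclusion functor `Poly_Cart ⥤ Poly`. -/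
def polyCartIncl : PolyCart.{u} ⥤ PFunctor.{u} where
  obj p := p
  map φ := φ.1
  map_id _ := rfl
  map_comp _ _ := rfl

lemma PolyHom.ext' {p q : PFunctor.{u}} {φ ψ : PolyHom p q}
    (h1 : φ.onPos = ψ.onPos) (h2 : HEq φ.onDir ψ.onDir) : φ = ψ := by
  cases φ; cases ψ; cases h1; cases h2; rfl

/-- Every position of a colimit in `Poly` is in the image of some leg. -/
lemma poly_colimit_pos_surj {J : Type v} [Category.{v} J]
    (F : J ⥤ PolyCart.{u}) (c : Cocone F)
    (hc : IsColimit (polyCartIncl.mapCocone c))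
    (a : (polyCartIncl.obj c.pt).A) :
    ∃ (j : J) (x : (polyCartIncl.obj (F.obj j)).A), ((c.ι.app j).1).onPos x = a := by
  let q : PFunctor.{u} := ⟨ULift.{u} Prop, fun _ => PEmpty.{u + 1}⟩
  let φ₁ : polyCartIncl.obj c.pt ⟶ q :=
    ⟨fun a => ⟨∃ (j : J) (x : (polyCartIncl.obj (F.obj j)).A), ((c.ι.app j).1).onPos x = a⟩,
      fun _ e => e.elim⟩
  let φ₂ : polyCartIncl.obj c.pt ⟶ q := ⟨fun _ => ⟨True⟩, fun _ e => e.elim⟩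
  have heq : φ₁ = φ₂ := by
    apply hc.hom_ext
    intro j
    apply PolyHom.ext'
    · funext x
      show (⟨_⟩ : ULift Prop) = ⟨True⟩
      congr 1
      exact propext ⟨fun _ => trivial, fun _ => ⟨j, x, rfl⟩⟩
    · apply heq_of_eq
      funext x e
      exact e.elim
  have := congrFun (congrArg PolyHom.onPos heq) a
  have hP : (∃ (j : J) (x : (polyCartIncl.obj (F.obj j)).A), ((c.ι.app j).1).onPos x = a) = True :=
    congrArg ULift.down this
  exact hP ▸ trivial

/-- The inclusion `Poly_Cart ⥤ Poly` of the wide subcategory of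
cartesian maps reflects all colimits: if a cocone in `Poly_Cart` becomes a colimit
cocone in `Poly`, then it is a colimit cocone in `Poly_Cart`. -/
theorem polyCartIncl_reflects_colimits {J : Type v} [Category.{v} J]
    (F : J ⥤ PolyCart.{u}) (c : Cocone F)
    (hc : IsColimit (polyCartIncl.mapCocone c)) :
    Nonempty (IsColimit c) := by
  have cart : ∀ (s : Cocone F), IsCartesian (hc.desc (polyCartIncl.mapCocone s)) := by
    intro s a
    obtain ⟨j, x, hx⟩ := poly_colimit_pos_surj F c hc a
    set d := hc.desc (polyCartIncl.mapCocone s) with hd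
    have hfac : (c.ι.app j).1 ≫ d = (s.ι.app j).1 := hc.fac (polyCartIncl.mapCocone s) j
    have hcomp : Function.Bijective
        (((c.ι.app j).1.onDir x) ∘ (d.onDir ((c.ι.app j).1.onPos x))) := by
      show Function.Bijective (((c.ι.app j).1 ≫ d).onDir x)
      rw [hfac]
      exact (s.ι.app j).2 x
    have hbij : Function.Bijective (d.onDir ((c.ι.app j).1.onPos x)) :=
      (Function.Bijective.of_comp_iff' ((c.ι.app j).2 x) _).mp hcomp
    rw [← hx]
    exact hbij
  exact ⟨{
    desc := fun s => ⟨hc.desc (polyCartIncl.mapCocone s), cart s⟩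
    fac := fun s j => Subtype.ext (hc.fac (polyCartIncl.mapCocone s) j)
    uniq := fun s m hm => Subtype.ext
      (hc.uniq (polyCartIncl.mapCocone s) m.1 fun j => congrArg Subtype.val (hm j)) }⟩
end

section
/- Let I be a filtered category and p : I → Poly a diagram in which every structure map is cartesian. Then for any polynomial functor q, the canonical map colim_i (p_i ◁ q) → (colim_i p_i) ◁ q is an isomorphism. -/
universe v u

open CategoryTheory Limits

namespace PolyColimAux

open CategoryTheory Limits

/-- Extensionality for `PolyHom` via sigma-pairs. -/
theorem polyHom_ext {p r : PFunctor.{u}} {f g : p ⟶ r}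
    (h : ∀ a : p.A, (⟨f.onPos a, f.onDir a⟩ : Σ x : r.A, r.B x → p.B a) =
      ⟨g.onPos a, g.onDir a⟩) : f = g := by
  obtain ⟨fp, fd⟩ := f; obtain ⟨gp, gd⟩ := g
  have hp : fp = gp := funext fun a => congrArg Sigma.fst (h a)
  subst hp
  have hd : fd = gd := funext fun a => by
    have := h a
    simpa using (Sigma.mk.inj_iff.mp this).2
  subst hd; rfl

/-- Positions functor `Poly ⥤ Type u`. -/
def posF : PFunctor.{u} ⥤ Type u where
  obj p := p.A
  map φ := TypeCat.ofHom φ.onPos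
  map_id _ := rfl
  map_comp _ _ := rfl

/-- Constant polynomial with position set `X`. -/
def constP (X : Type u) : PFunctor.{u} := ⟨X, fun _ => PEmpty⟩

theorem hom_constP_ext {p : PFunctor.{u}} {X : Type u} {f g : p ⟶ constP X}
    (h : f.onPos = g.onPos) : f = g := by
  apply polyHom_ext; intro a
  rw [Sigma.mk.inj_iff]
  exact ⟨congrFun h a, heq_of_eq (funext fun d => d.elim)⟩

variable {I : Type v} [Category.{v} I]

/-- Package a cocone over `G ⋙ posF` as a cocone over `G` with constant-polynomial vertex. -/
def constCocone {G : I ⥤ PFunctor.{u}} (s : Cocone (G ⋙ posF)) : Cocone G where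
  pt := constP s.pt
  ι :=
    { app := fun i => ⟨fun x => s.ι.app i x, fun _ d => PEmpty.elim d⟩
      naturality := fun i j u => by
        apply hom_constP_ext
        funext x
        exact ConcreteCategory.congr_hom (s.ι.naturality u) x }

/-- The position cocone of a colimit cocone in `Poly` is a colimit in `Type u`. -/
noncomputable def posIsColimit {G : I ⥤ PFunctor.{u}} {c : Cocone G} (hc : IsColimit c) :
    IsColimit (posF.mapCocone c) where
  desc s := TypeCat.ofHom (hc.desc (constCocone s)).onPos
  fac s i := ConcreteCategory.hom_ext _ _ fun x =>
    congrFun (congrArg PolyHom.onPos (hc.fac (constCocone s) i)) x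
  uniq s m hm := by
    have := hc.uniq (constCocone s) ⟨fun x => m x, fun _ d => PEmpty.elim d⟩
      (fun i => hom_constP_ext (funext fun x => ConcreteCategory.congr_hom (hm i) x))
    exact ConcreteCategory.hom_ext _ _ fun x => congrFun (congrArg PolyHom.onPos this) x

end PolyColimAux
namespace PolyColimAux

open CategoryTheory Limits

section Transport

/-- Backwards transport of directions along a polynomial map, with a position equality. -/
def tdirHom {p r : PFunctor.{u}} (φ : p ⟶ r) (x : p.A) {z : r.A}
    (h : φ.onPos x = z) : r.B z → p.B x :=
  fun e => φ.onDir x (cast (congrArg r.B h.symm) e)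

theorem tdirHom_rfl {p r : PFunctor.{u}} (φ : p ⟶ r) (x : p.A) (e) :
    tdirHom φ x rfl e = φ.onDir x e := rfl

theorem tdirHom_congr {p r : PFunctor.{u}} {φ φ' : p ⟶ r} (hφ : φ = φ') (x : p.A) {z : r.A}
    (h : φ.onPos x = z) (h' : φ'.onPos x = z) (e) :
    tdirHom φ x h e = tdirHom φ' x h' e := by subst hφ; rfl

theorem tdirHom_comp {p r s : PFunctor.{u}} (φ : p ⟶ r) (ψ : r ⟶ s) (x : p.A)
    {z1 : r.A} {z2 : s.A} (h1 : φ.onPos x = z1) (h2 : ψ.onPos z1 = z2)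
    (h : (φ ≫ ψ).onPos x = z2) (e : s.B z2) :
    tdirHom (φ ≫ ψ) x h e = tdirHom φ x h1 (tdirHom ψ z1 h2 e) := by
  subst h1; subst h2; rfl

variable {I : Type v} [Category.{v} I] {G : I ⥤ PFunctor.{u}}

/-- Backwards transport of directions along a structure map of the diagram. -/
def tdir {i k : I} (u : i ⟶ k) (x : (G.obj i).A) {z : (G.obj k).A}
    (h : (G.map u).onPos x = z) : (G.obj k).B z → (G.obj i).B x :=
  tdirHom (G.map u) x h

theorem tdir_rfl {i k : I} (u : i ⟶ k) (x : (G.obj i).A) (e) :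
    tdir (G := G) u x rfl e = (G.map u).onDir x e := rfl

variable (hG : ∀ {i j : I} (u : i ⟶ j), IsCartesian (G.map u))

include hG in
theorem tdir_bij {i k : I} (u : i ⟶ k) (x : (G.obj i).A) {z : (G.obj k).A}
    (h : (G.map u).onPos x = z) : Function.Bijective (tdir u x h) := by
  subst h; exact hG u x

theorem tdir_comp {i j k : I} (u : i ⟶ j) (v : j ⟶ k) (x : (G.obj i).A)
    {z1 : (G.obj j).A} {z2 : (G.obj k).A} (h1 : (G.map u).onPos x = z1)
    (h2 : (G.map v).onPos z1 = z2) (h : (G.map (u ≫ v)).onPos x = z2) (e : (G.obj k).B z2) :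
    tdir (u ≫ v) x h e = tdir u x h1 (tdir v z1 h2 e) := by
  have hφ : (G.map u ≫ G.map v).onPos x = z2 := by
    rw [← G.map_comp]; exact h
  rw [tdir, tdirHom_congr (G.map_comp u v) x h hφ]
  exact tdirHom_comp (G.map u) (G.map v) x h1 h2 hφ e

theorem tdir_eqmor {i k : I} {u u' : i ⟶ k} (hu : u = u') (x : (G.obj i).A) {z : (G.obj k).A}
    (h : (G.map u).onPos x = z) (h' : (G.map u').onPos x = z) (e) :
    tdir u x h e = tdir u' x h' e := by subst hu; rfl

end Transport

end PolyColimAux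
namespace PolyColimAux

open CategoryTheory Limits

section Indep

variable {I : Type v} [Category.{v} I] {G : I ⥤ PFunctor.{u}}
variable (hG : ∀ {i j : I} (u : i ⟶ j), IsCartesian (G.map u))

include hG in
theorem tdir_inj2 {i m : I} {U U' : i ⟶ m} (hU : U = U') (x : (G.obj i).A)
    {z z' : (G.obj m).A} (hzU : (G.map U).onPos x = z) (hzU' : (G.map U').onPos x = z')
    {w : (G.obj m).B z} {w' : (G.obj m).B z'}
    (h : tdir U x hzU w = tdir U' x hzU' w') : HEq w w' := by
  subst hU; subst hzU; subst hzU'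
  exact heq_of_eq ((tdir_bij hG U x rfl).1 h)

theorem tdir_hcongr {i k : I} {u u' : i ⟶ k} (hu : u = u') (x : (G.obj i).A)
    {z z' : (G.obj k).A} (hz : z = z') (h : (G.map u).onPos x = z)
    (h' : (G.map u').onPos x = z') {w : (G.obj k).B z} {w' : (G.obj k).B z'}
    (hw : HEq w w') : tdir u x h w = tdir u' x h' w' := by
  subst hu; subst hz; rw [eq_of_heq hw]

variable [IsFiltered I]

include hG in
/-- The independence ("zigzag invariance") lemma: if two directions at two apexes restrict
to the same direction over `x`, they restrict to the same direction over `y`. -/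
theorem tdir_indep {i j k k' : I} (u : i ⟶ k) (v : j ⟶ k) (u' : i ⟶ k') (v' : j ⟶ k')
    (x : (G.obj i).A) (y : (G.obj j).A)
    (h : (G.map v).onPos y = (G.map u).onPos x) (h' : (G.map v').onPos y = (G.map u').onPos x)
    (w : (G.obj k).B ((G.map u).onPos x)) (w' : (G.obj k').B ((G.map u').onPos x))
    (hw : tdir u x rfl w = tdir u' x rfl w') :
    tdir v y h w = tdir v' y h' w' := by
  -- refine to a common stage where both the `x`-side and `y`-side morphisms agree
  let l := IsFiltered.max k k'
  let t : k ⟶ l := IsFiltered.leftToMax k k'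
  let t' : k' ⟶ l := IsFiltered.rightToMax k k'
  let c : l ⟶ IsFiltered.coeq (u ≫ t) (u' ≫ t') := IsFiltered.coeqHom (u ≫ t) (u' ≫ t')
  let s : k ⟶ _ := t ≫ c
  let s' : k' ⟶ _ := t' ≫ c
  let c2 := IsFiltered.coeqHom (v ≫ s) (v' ≫ s')
  let S : k ⟶ _ := s ≫ c2
  let S' : k' ⟶ _ := s' ≫ c2
  have hUS : u ≫ S = u' ≫ S' := by
    have h1 : (u ≫ t) ≫ c = (u' ≫ t') ≫ c := IsFiltered.coeq_condition _ _
    show u ≫ (t ≫ c) ≫ c2 = u' ≫ (t' ≫ c) ≫ c2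
    simp only [← Category.assoc]
    rw [h1]
  have hVS : v ≫ S = v' ≫ S' := by
    have h2 : (v ≫ s) ≫ c2 = (v' ≫ s') ≫ c2 := IsFiltered.coeq_condition _ _
    show v ≫ s ≫ c2 = v' ≫ s' ≫ c2
    exact (Category.assoc v s c2).symm.trans (h2.trans (Category.assoc v' s' c2))
  obtain ⟨wt, hwt⟩ := (tdir_bij hG S ((G.map u).onPos x) rfl).2 w
  obtain ⟨wt', hwt'⟩ := (tdir_bij hG S' ((G.map u').onPos x) rfl).2 w'
  have hX : (G.map (u ≫ S)).onPos x = (G.map S).onPos ((G.map u).onPos x) := by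
    rw [G.map_comp]; rfl
  have hX' : (G.map (u' ≫ S')).onPos x = (G.map S').onPos ((G.map u').onPos x) := by
    rw [G.map_comp]; rfl
  have hyp : tdir (u ≫ S) x hX wt = tdir (u' ≫ S') x hX' wt' := by
    rw [tdir_comp u S x rfl rfl hX wt, tdir_comp u' S' x rfl rfl hX' wt', hwt, hwt']
    exact hw
  have hwteq : HEq wt wt' := tdir_inj2 hG hUS x hX hX' hyp
  have hY : (G.map (v ≫ S)).onPos y = (G.map S).onPos ((G.map u).onPos x) := by
    rw [G.map_comp]; exact congrArg (G.map S).onPos h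
  have hY' : (G.map (v' ≫ S')).onPos y = (G.map S').onPos ((G.map u').onPos x) := by
    rw [G.map_comp]; exact congrArg (G.map S').onPos h'
  have hz : (G.map S).onPos ((G.map u).onPos x) = (G.map S').onPos ((G.map u').onPos x) := by
    rw [← hX, ← hX', hUS]
  calc tdir v y h w = tdir v y h (tdir S ((G.map u).onPos x) rfl wt) := by rw [hwt]
    _ = tdir (v ≫ S) y hY wt := (tdir_comp v S y h rfl hY wt).symm
    _ = tdir (v' ≫ S') y hY' wt' := tdir_hcongr hVS y hz hY hY' hwteq
    _ = tdir v' y h' (tdir S' ((G.map u').onPos x) rfl wt') := tdir_comp v' S' y h' rfl hY' wt'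
    _ = tdir v' y h' w' := by rw [hwt']

end Indep

end PolyColimAux
namespace PolyColimAux

open CategoryTheory Limits

section Push

variable {I : Type v} [Category.{v} I] {G : I ⥤ PFunctor.{u}}

theorem tdirHom_point {p r : PFunctor.{u}} (ψ : p ⟶ r) {z z' : p.A} (hz : z = z')
    {w : r.A} (h : ψ.onPos z = w) (h' : ψ.onPos z' = w) (e : r.B w) :
    HEq (tdirHom ψ z h e) (tdirHom ψ z' h' e) := by subst hz; rfl

theorem tdir_id {i : I} (x : (G.obj i).A) {z : (G.obj i).A}
    (h : (G.map (𝟙 i)).onPos x = z) (e : (G.obj i).B z) :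
    HEq (tdir (𝟙 i) x h e) e := by
  have hm : G.map (𝟙 i) = 𝟙 (G.obj i) := G.map_id i
  have h' : (𝟙 (G.obj i) : G.obj i ⟶ G.obj i).onPos x = z := by rw [← hm]; exact h
  rw [tdir, tdirHom_congr hm x h h']
  have hx : x = z := h'
  subst hx
  rfl

/-- `Push x y d e`: the direction `d` over `x` is matched with `e` over `y` through
some common refinement. -/
def Push {i j : I} (x : (G.obj i).A) (y : (G.obj j).A) (d : (G.obj i).B x)
    (e : (G.obj j).B y) : Prop :=
  ∃ (k : I) (u : i ⟶ k) (v : j ⟶ k) (huv : (G.map u).onPos x = (G.map v).onPos y)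
    (w : (G.obj k).B ((G.map u).onPos x)),
      tdir u x rfl w = d ∧ tdir v y huv.symm w = e

variable (hG : ∀ {i j : I} (u : i ⟶ j), IsCartesian (G.map u))

include hG in
theorem Push.uniq [IsFiltered I] {i j : I} {x : (G.obj i).A} {y : (G.obj j).A}
    {d : (G.obj i).B x} {e e' : (G.obj j).B y}
    (h1 : Push x y d e) (h2 : Push x y d e') : e = e' := by
  obtain ⟨k, u, v, huv, w, hw1, hw2⟩ := h1
  obtain ⟨k', u', v', huv', w', hw1', hw2'⟩ := h2
  rw [← hw2, ← hw2']
  exact tdir_indep hG u v u' v' x y huv.symm huv'.symm w w' (hw1.trans hw1'.symm)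

include hG in
theorem Push.total {i j k : I} (u : i ⟶ k) (v : j ⟶ k) {x : (G.obj i).A} {y : (G.obj j).A}
    (huv : (G.map u).onPos x = (G.map v).onPos y) (d : (G.obj i).B x) :
    ∃ e, Push x y d e := by
  obtain ⟨w, hw⟩ := (tdir_bij hG u x rfl).2 d
  exact ⟨tdir v y huv.symm w, k, u, v, huv, w, hw, rfl⟩

theorem Push.symm {i j : I} {x : (G.obj i).A} {y : (G.obj j).A}
    {d : (G.obj i).B x} {e : (G.obj j).B y} (h : Push x y d e) : Push y x e d := by
  obtain ⟨k, u, v, huv, w, hw1, hw2⟩ := h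
  refine ⟨k, v, u, huv.symm, cast (congrArg (G.obj k).B huv) w, ?_, ?_⟩
  · rw [← hw2]
    exact tdir_hcongr rfl y huv.symm rfl huv.symm (cast_heq _ w)
  · rw [← hw1]
    exact tdir_hcongr rfl x huv.symm huv.symm.symm rfl (cast_heq _ w)

include hG in
theorem Push.structure {i j : I} (u : i ⟶ j) (x : (G.obj i).A)
    (e : (G.obj j).B ((G.map u).onPos x)) :
    Push x ((G.map u).onPos x) ((G.map u).onDir x e) e := by
  have hid : (G.map (𝟙 j)).onPos ((G.map u).onPos x) = (G.map u).onPos x := by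
    rw [G.map_id]; rfl
  refine ⟨j, u, 𝟙 j, hid.symm, e, rfl, ?_⟩
  exact eq_of_heq (tdir_id ((G.map u).onPos x) hid.symm.symm e)

include hG in
theorem Push.trans [IsFiltered I] {i j l : I} {x : (G.obj i).A} {y : (G.obj j).A}
    {z : (G.obj l).A} {d : (G.obj i).B x} {e : (G.obj j).B y} {f : (G.obj l).B z}
    (hxy : Push x y d e) (hyz : Push y z e f) : Push x z d f := by
  obtain ⟨k1, u1, v1, h1, w1, c11, c12⟩ := hxy
  obtain ⟨k2, u2, v2, h2, w2, c21, c22⟩ := hyz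
  let m := IsFiltered.max k1 k2
  let t1 : k1 ⟶ m := IsFiltered.leftToMax k1 k2
  let t2 : k2 ⟶ m := IsFiltered.rightToMax k1 k2
  let n := IsFiltered.coeqHom (v1 ≫ t1) (u2 ≫ t2)
  let T1 : k1 ⟶ _ := t1 ≫ n
  let T2 : k2 ⟶ _ := t2 ≫ n
  have hT : v1 ≫ T1 = u2 ≫ T2 := by
    have := IsFiltered.coeq_condition (v1 ≫ t1) (u2 ≫ t2)
    show v1 ≫ t1 ≫ n = u2 ≫ t2 ≫ n
    exact (Category.assoc v1 t1 n).symm.trans (this.trans (Category.assoc u2 t2 n))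
  obtain ⟨W1, hW1⟩ := (tdir_bij hG T1 ((G.map u1).onPos x) rfl).2 w1
  obtain ⟨W2, hW2⟩ := (tdir_bij hG T2 ((G.map u2).onPos y) rfl).2 w2
  -- the two lifted elements agree over `y`
  have hY1 : (G.map (v1 ≫ T1)).onPos y = (G.map T1).onPos ((G.map u1).onPos x) := by
    rw [G.map_comp]; exact congrArg (G.map T1).onPos h1.symm
  have hY2 : (G.map (u2 ≫ T2)).onPos y = (G.map T2).onPos ((G.map u2).onPos y) := by
    rw [G.map_comp]; rfl
  have hy1 : tdir (v1 ≫ T1) y hY1 W1 = e := by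
    rw [tdir_comp v1 T1 y h1.symm rfl hY1 W1, hW1]; exact c12
  have hy2 : tdir (u2 ≫ T2) y hY2 W2 = e := by
    rw [tdir_comp u2 T2 y rfl rfl hY2 W2, hW2]; exact c21
  have hWeq : HEq W1 W2 := tdir_inj2 hG hT y hY1 hY2 (hy1.trans hy2.symm)
  -- assemble the composite witness
  have hcomp1 : (G.map (u1 ≫ T1)).onPos x = (G.map T1).onPos ((G.map u1).onPos x) := by
    rw [G.map_comp]; rfl
  have hcomp2 : (G.map (v2 ≫ T2)).onPos z = (G.map T2).onPos ((G.map u2).onPos y) := by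
    rw [G.map_comp]; exact congrArg (G.map T2).onPos h2.symm
  have huv : (G.map (u1 ≫ T1)).onPos x = (G.map (v2 ≫ T2)).onPos z := by
    rw [hcomp1, hcomp2, ← hY1, ← hY2, hT]
  refine ⟨_, u1 ≫ T1, v2 ≫ T2, huv, cast (congrArg (G.obj _).B hcomp1.symm) W1, ?_, ?_⟩
  · rw [tdir_hcongr (rfl : u1 ≫ T1 = u1 ≫ T1) x hcomp1 rfl hcomp1
      (cast_heq _ W1)]
    rw [tdir_comp u1 T1 x rfl rfl hcomp1 W1, hW1]
    exact c11
  · have hz : (G.map (u1 ≫ T1)).onPos x = (G.map T2).onPos ((G.map u2).onPos y) :=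
      hcomp1.trans (hY1.symm.trans
        ((congrArg (fun m => (G.map m).onPos y) hT).trans hY2))
    rw [tdir_hcongr (rfl : v2 ≫ T2 = v2 ≫ T2) z hz huv.symm hcomp2
      ((cast_heq _ W1).trans hWeq)]
    rw [tdir_comp v2 T2 z h2.symm rfl hcomp2 W2, hW2]
    exact c22

end Push

end PolyColimAux
namespace PolyColimAux

open CategoryTheory Limits

section CoconeBasics

variable {I : Type v} [Category.{v} I] [IsFiltered I] {G : I ⥤ PFunctor.{u}}

theorem tdirHom_point' {p r : PFunctor.{u}} (ψ : p ⟶ r) {z z' : p.A} (hz : z = z')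
    {w w' : r.A} (hw : w = w') (h : ψ.onPos z = w) (h' : ψ.onPos z' = w')
    {e : r.B w} {e' : r.B w'} (he : HEq e e') :
    HEq (tdirHom ψ z h e) (tdirHom ψ z' h' e') := by
  subst hz; subst hw; rw [eq_of_heq he]

variable {c : Cocone G}

theorem surjPos (hpos : IsColimit (posF.mapCocone c)) (a : c.pt.A) :
    ∃ i x, (c.ι.app i).onPos x = a :=
  by
  obtain ⟨i, x, h⟩ := Types.jointly_surjective (G ⋙ posF) hpos (show (posF.mapCocone c).pt from a)
  exact ⟨i, x, h⟩

theorem eqStage (hpos : IsColimit (posF.mapCocone c)) {i j : I}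
    {x : (G.obj i).A} {y : (G.obj j).A}
    (h : (c.ι.app i).onPos x = (c.ι.app j).onPos y) :
    ∃ (k : I) (u : i ⟶ k) (v : j ⟶ k), (G.map u).onPos x = (G.map v).onPos y := by
  have : HasColimit (G ⋙ posF) := HasColimit.mk ⟨_, hpos⟩
  exact (Types.FilteredColimit.isColimit_eq_iff (G ⋙ posF) hpos).mp
    (show (posF.mapCocone c).ι.app i x = (posF.mapCocone c).ι.app j y from h)

variable (hG : ∀ {i j : I} (u : i ⟶ j), IsCartesian (G.map u))
variable (hpos : IsColimit (posF.mapCocone c))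

include hG hpos in
theorem exists_push {i j : I} {x : (G.obj i).A} {y : (G.obj j).A}
    (h : (c.ι.app i).onPos x = (c.ι.app j).onPos y) (d : (G.obj i).B x) :
    ∃ e, Push x y d e := by
  obtain ⟨k, u, v, huv⟩ := eqStage hpos h
  exact Push.total hG u v huv d

/-- Transport of directions between positions which agree in the colimit. -/
noncomputable def tfun {i j : I} {x : (G.obj i).A} {y : (G.obj j).A}
    (h : (c.ι.app i).onPos x = (c.ι.app j).onPos y) (d : (G.obj i).B x) : (G.obj j).B y :=
  (exists_push hG hpos h d).choose

theorem tfun_push {i j : I} {x : (G.obj i).A} {y : (G.obj j).A}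
    (h : (c.ι.app i).onPos x = (c.ι.app j).onPos y) (d : (G.obj i).B x) :
    Push x y d (tfun hG hpos h d) :=
  (exists_push hG hpos h d).choose_spec

theorem push_tfun_eq {i j : I} {x : (G.obj i).A} {y : (G.obj j).A}
    (h : (c.ι.app i).onPos x = (c.ι.app j).onPos y) {d : (G.obj i).B x}
    {e : (G.obj j).B y} (hp : Push x y d e) : tfun hG hpos h d = e :=
  Push.uniq hG (tfun_push hG hpos h d) hp

theorem tfun_bij {i j : I} {x : (G.obj i).A} {y : (G.obj j).A}
    (h : (c.ι.app i).onPos x = (c.ι.app j).onPos y) :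
    Function.Bijective (tfun (c := c) hG hpos h) := by
  constructor
  · intro d d' hdd
    have h1 := (tfun_push hG hpos h d).symm
    have h2 := (tfun_push hG hpos h d').symm
    rw [hdd] at h1
    exact Push.uniq hG h1 h2
  · intro e
    refine ⟨tfun hG hpos h.symm e, ?_⟩
    exact push_tfun_eq hG hpos h (tfun_push hG hpos h.symm e).symm

include hG hpos in
theorem push_leg {i j : I} (x : (G.obj i).A) (y : (G.obj j).A) {a : c.pt.A}
    (hx : (c.ι.app i).onPos x = a) (hy : (c.ι.app j).onPos y = a) (D : c.pt.B a) :
    Push x y (tdirHom (c.ι.app i) x hx D) (tdirHom (c.ι.app j) y hy D) := by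
  have hxy : (c.ι.app i).onPos x = (c.ι.app j).onPos y := hx.trans hy.symm
  obtain ⟨k, u, v, huv⟩ := eqStage hpos hxy
  have hku : (c.ι.app k).onPos ((G.map u).onPos x) = a := by
    have h0 := congrArg (fun φ => PolyHom.onPos φ x) (c.w u)
    exact (h0 : (c.ι.app k).onPos ((G.map u).onPos x) = (c.ι.app i).onPos x).trans hx
  have hkv : (c.ι.app k).onPos ((G.map v).onPos y) = a := by
    have h0 := congrArg (fun φ => PolyHom.onPos φ y) (c.w v)
    exact (h0 : (c.ι.app k).onPos ((G.map v).onPos y) = (c.ι.app j).onPos y).trans hy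
  refine ⟨k, u, v, huv, tdirHom (c.ι.app k) ((G.map u).onPos x) hku D, ?_, ?_⟩
  · -- over x
    have H : ((G.map u ≫ c.ι.app k)).onPos x = a := hku
    rw [tdir, ← tdirHom_comp (G.map u) (c.ι.app k) x rfl hku H D]
    exact tdirHom_congr (c.w u) x H hx D
  · -- over y
    have H : ((G.map v ≫ c.ι.app k)).onPos y = a := hkv
    have hpt : HEq (tdirHom (c.ι.app k) ((G.map u).onPos x) hku D)
        (tdirHom (c.ι.app k) ((G.map v).onPos y) hkv D) :=
      tdirHom_point (c.ι.app k) huv hku hkv D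
    rw [tdir_hcongr rfl y huv huv.symm rfl hpt]
    rw [tdir, ← tdirHom_comp (G.map v) (c.ι.app k) y rfl hkv H D]
    exact tdirHom_congr (c.w v) y H hy D

end CoconeBasics

end PolyColimAux
namespace PolyColimAux

open CategoryTheory Limits

theorem sigma_fun_ext {A : Type*} {P : A → Type*} {C : Type*} {a a' : A}
    {f : P a → C} {g : P a' → C} (h : a = a')
    (hfg : ∀ (d : P a) (d' : P a'), HEq d d' → f d = g d') :
    (⟨a, f⟩ : Σ x, (P x → C)) = ⟨a', g⟩ := by
  subst h
  exact congrArg (Sigma.mk a) (funext fun d => hfg d d HEq.rfl)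

section LemmaM

variable {I : Type v} [Category.{v} I] [IsFiltered I] {G : I ⥤ PFunctor.{u}}
variable {c : Cocone G}
variable (hG : ∀ {i j : I} (u : i ⟶ j), IsCartesian (G.map u))
variable (hpos : IsColimit (posF.mapCocone c))
variable (hlegs : ∀ i, IsCartesian (c.ι.app i))

noncomputable def cidx (a : c.pt.A) : I := (surjPos hpos a).choose

noncomputable def crep (a : c.pt.A) : (G.obj (cidx hpos a)).A :=
  (surjPos hpos a).choose_spec.choose

theorem crep_spec (a : c.pt.A) : (c.ι.app (cidx hpos a)).onPos (crep hpos a) = a :=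
  (surjPos hpos a).choose_spec.choose_spec

/-- The equivalence between the colimit's directions at `a` and the directions at a
position mapping to `a`, for a cocone with cartesian legs. -/
noncomputable def legEquivAt (i : I) (x : (G.obj i).A) {a : c.pt.A}
    (h : (c.ι.app i).onPos x = a) : c.pt.B a ≃ (G.obj i).B x :=
  Equiv.ofBijective (tdirHom (c.ι.app i) x h) (by subst h; exact hlegs i x)

/-- The component at a representative `(i, x)` of the descending map to a cocone `s`. -/
noncomputable def valS (s : Cocone G) (i : I) (x : (G.obj i).A) {a : c.pt.A}
    (hx : (c.ι.app i).onPos x = a) : Σ P : s.pt.A, (s.pt.B P → c.pt.B a) :=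
  ⟨(s.ι.app i).onPos x, fun D => (legEquivAt hlegs i x hx).symm ((s.ι.app i).onDir x D)⟩

theorem valS_point (s : Cocone G) (k : I) {z z' : (G.obj k).A} (hz : z = z') {a : c.pt.A}
    (h1 : (c.ι.app k).onPos z = a) (h2 : (c.ι.app k).onPos z' = a) :
    valS hlegs s k z h1 = valS hlegs s k z' h2 := by subst hz; rfl

theorem valS_step (s : Cocone G) {i k : I} (u : i ⟶ k) (x : (G.obj i).A) {a : c.pt.A}
    (hx : (c.ι.app i).onPos x = a) (hku : (c.ι.app k).onPos ((G.map u).onPos x) = a) :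
    valS hlegs s i x hx = valS hlegs s k ((G.map u).onPos x) hku := by
  have hfst : (s.ι.app i).onPos x = (s.ι.app k).onPos ((G.map u).onPos x) :=
    (congrArg (fun φ => PolyHom.onPos φ x) (s.w u)).symm
  refine sigma_fun_ext hfst ?_
  intro D D' hDD
  -- compare via injectivity of the leg equivalence at `(i, x)`
  rw [Equiv.symm_apply_eq]
  have goalEq : ∀ Z : c.pt.B a, ((legEquivAt hlegs i x hx) Z : (G.obj i).B x) =
      tdirHom (c.ι.app i) x hx Z := fun _ => rfl
  have hZ : tdirHom (c.ι.app k) ((G.map u).onPos x) hku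
      ((legEquivAt hlegs k ((G.map u).onPos x) hku).symm ((s.ι.app k).onDir _ D')) =
      (s.ι.app k).onDir _ D' :=
    Equiv.ofBijective_apply_symm_apply _ _ _
  set Zk := (legEquivAt hlegs k ((G.map u).onPos x) hku).symm ((s.ι.app k).onDir _ D')
  have H : (G.map u ≫ c.ι.app k).onPos x = a := hku
  have step1 : tdirHom (c.ι.app i) x hx Zk = (G.map u).onDir x ((s.ι.app k).onDir _ D') := by
    rw [← tdirHom_congr (c.w u) x H hx Zk]
    rw [tdirHom_comp (G.map u) (c.ι.app k) x rfl hku H Zk]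
    rw [tdirHom_rfl, hZ]
  have hS : (s.ι.app k).onPos ((G.map u).onPos x) = (s.ι.app i).onPos x := hfst.symm
  have Hs : (G.map u ≫ s.ι.app k).onPos x = (s.ι.app i).onPos x :=
    congrArg (fun φ => PolyHom.onPos φ x) (s.w u)
  have step2 : (s.ι.app i).onDir x D =
      (G.map u).onDir x (tdirHom (s.ι.app k) ((G.map u).onPos x) hS D) := by
    rw [← tdirHom_rfl (s.ι.app i) x D]
    rw [← tdirHom_congr (s.w u) x Hs rfl D]
    rw [tdirHom_comp (G.map u) (s.ι.app k) x rfl hS Hs D]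
    rw [tdirHom_rfl]
  rw [goalEq, step1, step2]
  congr 1
  show (s.ι.app k).onDir _ (cast (congrArg s.pt.B hS.symm) D) = (s.ι.app k).onDir _ D'
  congr 1
  exact eq_of_heq ((cast_heq _ D).trans hDD)

include hpos in
theorem valS_indep (s : Cocone G) {i j : I} (x : (G.obj i).A) (y : (G.obj j).A)
    {a : c.pt.A} (hx : (c.ι.app i).onPos x = a) (hy : (c.ι.app j).onPos y = a) :
    valS hlegs s i x hx = valS hlegs s j y hy := by
  have hxy : (c.ι.app i).onPos x = (c.ι.app j).onPos y := hx.trans hy.symm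
  obtain ⟨k, u, v, huv⟩ := eqStage hpos hxy
  have hku : (c.ι.app k).onPos ((G.map u).onPos x) = a :=
    ((congrArg (fun φ => PolyHom.onPos φ x) (c.w u)) :
      (c.ι.app k).onPos ((G.map u).onPos x) = (c.ι.app i).onPos x).trans hx
  have hkv : (c.ι.app k).onPos ((G.map v).onPos y) = a :=
    ((congrArg (fun φ => PolyHom.onPos φ y) (c.w v)) :
      (c.ι.app k).onPos ((G.map v).onPos y) = (c.ι.app j).onPos y).trans hy
  rw [valS_step hlegs s u x hx hku, valS_step hlegs s v y hy hkv]
  exact valS_point hlegs s k huv hku hkv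

/-- **Colimit criterion.** A filtered cocone over a cartesian diagram whose legs are
cartesian and whose cocone of positions is a colimit of types is a colimit in `Poly`. -/
noncomputable def isColimitOfCartesian : IsColimit c where
  desc s :=
    { onPos := fun a => (valS hlegs s _ _ (crep_spec hpos a)).1
      onDir := fun a => (valS hlegs s _ _ (crep_spec hpos a)).2 }
  fac s i := by
    apply polyHom_ext
    intro x
    show (⟨(valS hlegs s _ _ (crep_spec hpos ((c.ι.app i).onPos x))).1,
      fun D => (c.ι.app i).onDir x
        ((valS hlegs s _ _ (crep_spec hpos ((c.ι.app i).onPos x))).2 D)⟩ :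
          Σ P : s.pt.A, s.pt.B P → (G.obj i).B x) = ⟨(s.ι.app i).onPos x, (s.ι.app i).onDir x⟩
    rw [valS_indep hpos hlegs s _ x (crep_spec hpos ((c.ι.app i).onPos x)) rfl]
    refine congrArg (Sigma.mk _) (funext fun D => ?_)
    show (c.ι.app i).onDir x ((legEquivAt hlegs i x rfl).symm ((s.ι.app i).onDir x D)) =
      (s.ι.app i).onDir x D
    exact Equiv.ofBijective_apply_symm_apply _ _ _
  uniq s m hm := by
    apply polyHom_ext
    intro a
    have key : ∀ (i : I) (x : (G.obj i).A) (hx : (c.ι.app i).onPos x = a),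
        (⟨m.onPos a, m.onDir a⟩ : Σ P : s.pt.A, s.pt.B P → c.pt.B a) =
          valS hlegs s i x hx := by
      intro i x hx
      subst hx
      simp only [valS]
      rw [← hm i]
      exact congrArg (Sigma.mk _)
        (funext fun D => (Equiv.ofBijective_symm_apply_apply _ _ _).symm)
    show (⟨m.onPos a, m.onDir a⟩ : Σ P : s.pt.A, s.pt.B P → c.pt.B a) =
      ⟨(valS hlegs s _ _ (crep_spec hpos a)).1, (valS hlegs s _ _ (crep_spec hpos a)).2⟩
    rw [key _ _ (crep_spec hpos a)]
end LemmaM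

end PolyColimAux
namespace PolyColimAux

open CategoryTheory Limits

section Canonical

variable {I : Type v} [Category.{v} I] [IsFiltered I] {G : I ⥤ PFunctor.{u}}
variable {c : Cocone G}
variable (hG : ∀ {i j : I} (u : i ⟶ j), IsCartesian (G.map u))
variable (hpos : IsColimit (posF.mapCocone c))

theorem crep_congr {a a' : c.pt.A} (h : a = a') :
    HEq (crep hpos a) (crep hpos a') := by subst h; rfl

theorem push_congr {i i' j : I} (hi : i = i') {x : (G.obj i).A} {x' : (G.obj i').A}
    (hx : HEq x x') {d : (G.obj i).B x} {d' : (G.obj i').B x'} (hd : HEq d d')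
    {y : (G.obj j).A} {e : (G.obj j).B y} (h : Push x y d e) : Push x' y d' e := by
  subst hi
  have hx' := eq_of_heq hx
  subst hx'
  rw [← eq_of_heq hd]
  exact h

/-- The canonical colimit polynomial: positions are those of `c.pt`, directions at `a`
are the directions of a chosen representative. -/
noncomputable def P0 : PFunctor.{u} :=
  ⟨c.pt.A, fun a => (G.obj (cidx hpos a)).B (crep hpos a)⟩

/-- The legs of the canonical cocone. -/
noncomputable def leg (i : I) : G.obj i ⟶ P0 (c := c) hpos where
  onPos := (c.ι.app i).onPos
  onDir x d := tfun hG hpos (crep_spec hpos ((c.ι.app i).onPos x)) d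

theorem leg_cartesian (i : I) : IsCartesian (leg hG hpos i) := by
  intro x
  exact tfun_bij hG hpos (crep_spec hpos ((c.ι.app i).onPos x))

theorem leg_w {i j : I} (u : i ⟶ j) :
    G.map u ≫ leg hG hpos j = leg hG hpos i := by
  apply polyHom_ext
  intro x
  have hw : (c.ι.app j).onPos ((G.map u).onPos x) = (c.ι.app i).onPos x :=
    congrArg (fun φ => PolyHom.onPos φ x) (c.w u)
  refine sigma_fun_ext hw ?_
  intro d d' hdd
  show (G.map u).onDir x
      (tfun hG hpos (crep_spec hpos ((c.ι.app j).onPos ((G.map u).onPos x))) d) =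
    tfun hG hpos (crep_spec hpos ((c.ι.app i).onPos x)) d'
  symm
  apply push_tfun_eq hG hpos
  have p1 : Push (crep hpos ((c.ι.app j).onPos ((G.map u).onPos x))) ((G.map u).onPos x)
      d (tfun hG hpos (crep_spec hpos ((c.ι.app j).onPos ((G.map u).onPos x))) d) :=
    tfun_push hG hpos _ d
  have p2 : Push ((G.map u).onPos x) x
      (tfun hG hpos (crep_spec hpos ((c.ι.app j).onPos ((G.map u).onPos x))) d)
      ((G.map u).onDir x (tfun hG hpos (crep_spec hpos ((c.ι.app j).onPos ((G.map u).onPos x))) d)) :=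
    (Push.structure hG u x _).symm
  have p3 := Push.trans hG p1 p2
  exact push_congr (congrArg (cidx hpos) hw) (crep_congr hpos hw) hdd p3

/-- The canonical cocone. -/
noncomputable def c0 : Cocone G where
  pt := P0 (c := c) hpos
  ι :=
    { app := leg hG hpos
      naturality := fun i j u => by
        rw [leg_w hG hpos u]
        exact (Category.comp_id _).symm }

noncomputable def c0_pos : IsColimit (posF.mapCocone (c0 hG hpos)) :=
  hpos.ofIsoColimit (Cocones.ext (Iso.refl _) (fun _ => ConcreteCategory.hom_ext _ _ fun _ => rfl))

noncomputable def c0_isColimit : IsColimit (c0 hG hpos) :=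
  isColimitOfCartesian (c0_pos hG hpos) (leg_cartesian hG hpos)

end Canonical

end PolyColimAux
namespace PolyColimAux

open CategoryTheory Limits

theorem fun_hcongr {A A' : Sort u_aux} {C : Sort u_aux2} (hA : A = A') {f : A → C} {g : A' → C}
    (hf : HEq f g) {b : A} {b' : A'} (hb : HEq b b') : f b = g b' := by
  subst hA; rw [eq_of_heq hf, eq_of_heq hb]

theorem tdirHom_bij_of_cartesian {p r : PFunctor.{u}} {φ : p ⟶ r} (h : IsCartesian φ)
    (x : p.A) {a : r.A} (hx : φ.onPos x = a) : Function.Bijective (tdirHom φ x hx) := by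
  subst hx; exact h x

theorem polyHom_onDir_heq {p r : PFunctor.{u}} {f g : p ⟶ r} (h : f = g) (x : p.A) :
    HEq (f.onDir x) (g.onDir x) := by subst h; rfl

theorem compR_cartesian (q : PFunctor.{u}) {p p' : PFunctor.{u}} {φ : p ⟶ p'}
    (h : IsCartesian φ) : IsCartesian ((compR q).map φ) := by
  intro x
  have he : ((compR q).map φ).onDir x =
      ⇑(Equiv.sigmaCongrLeft (β := fun b => q.B (x.2 b))
        (Equiv.ofBijective (φ.onDir x.1) (h x.1))) := by
    funext d; cases d; rfl
  rw [he]
  exact (Equiv.sigmaCongrLeft _).bijective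

section Mapped

variable {I : Type v} [Category.{v} I] [IsFiltered I] {G : I ⥤ PFunctor.{u}}
variable {c : Cocone G}
variable (hG : ∀ {i j : I} (u : i ⟶ j), IsCartesian (G.map u))
variable (hpos : IsColimit (posF.mapCocone c))
variable (q : PFunctor.{u})

/-- The positions of `(- ◁ q)` applied to the canonical cocone again form a colimit. -/
noncomputable def mapped_pos :
    IsColimit (posF.mapCocone ((compR q).mapCocone (c0 hG hpos))) := by
  refine Types.FilteredColimit.isColimitOf _ _ ?_ ?_
  · -- joint surjectivity
    rintro (⟨a, f⟩ : (PFunctor.comp (P0 (c := c) hpos) q).A)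
    refine ⟨cidx hpos a, (⟨crep hpos a, fun d => f
      ((Equiv.ofBijective (tdirHom (leg hG hpos (cidx hpos a)) (crep hpos a)
        (crep_spec hpos a))
        (tdirHom_bij_of_cartesian (leg_cartesian hG hpos _) _ _)).symm d)⟩ :
        (PFunctor.comp (G.obj (cidx hpos a)) q).A), ?_⟩
    show (⟨a, f⟩ : Σ P : (P0 (c := c) hpos).A, (P0 (c := c) hpos).B P → q.A) = _
    refine sigma_fun_ext (crep_spec hpos a).symm ?_
    intro d d' hdd
    congr 1
    refine ((Equiv.symm_apply_eq _).mpr ?_).symm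
    exact eq_of_heq (tdirHom_point' (leg hG hpos (cidx hpos a)) rfl
      (crep_spec hpos a) rfl (crep_spec hpos a) hdd.symm)
  · -- equality at some finite stage
    intro i j xi xj hyp
    have hyp' : ((compR q).map (leg hG hpos i)).onPos xi =
        ((compR q).map (leg hG hpos j)).onPos xj := hyp
    obtain ⟨h1, hfun⟩ := Sigma.ext_iff.mp hyp'
    obtain ⟨k, u, v, huv⟩ := eqStage hpos (h1 :
      (c.ι.app i).onPos xi.1 = (c.ι.app j).onPos xj.1)
    refine ⟨k, u, v, ?_⟩
    show (⟨(G.map u).onPos xi.1, fun b => xi.2 ((G.map u).onDir xi.1 b)⟩ :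
        Σ z : (G.obj k).A, (G.obj k).B z → q.A) =
      ⟨(G.map v).onPos xj.1, fun b => xj.2 ((G.map v).onDir xj.1 b)⟩
    refine sigma_fun_ext huv ?_
    intro d d' hdd
    -- lift the directions to the colimit directions
    obtain ⟨b, hb⟩ := (leg_cartesian hG hpos k ((G.map u).onPos xi.1)).2 d
    have hposk : (c.ι.app k).onPos ((G.map u).onPos xi.1) =
        (c.ι.app k).onPos ((G.map v).onPos xj.1) := congrArg (c.ι.app k).onPos huv
    set b' : (P0 (c := c) hpos).B ((c.ι.app k).onPos ((G.map v).onPos xj.1)) :=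
      cast (congrArg (P0 (c := c) hpos).B hposk) b with hb'def
    have hbb' : HEq b b' := (cast_heq _ b).symm
    have hd' : (leg hG hpos k).onDir ((G.map v).onPos xj.1) b' = d' :=
      eq_of_heq ((tdirHom_point' (leg hG hpos k) huv.symm
        (congrArg (c.ι.app k).onPos huv.symm) rfl rfl hbb'.symm).trans
          ((heq_of_eq hb).trans hdd))
    -- positions of the casts in P0
    have hki : (c.ι.app k).onPos ((G.map u).onPos xi.1) = (c.ι.app i).onPos xi.1 :=
      congrArg (fun φ => PolyHom.onPos φ xi.1) (c.w u)
    have hkj : (c.ι.app k).onPos ((G.map v).onPos xj.1) = (c.ι.app j).onPos xj.1 :=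
      congrArg (fun φ => PolyHom.onPos φ xj.1) (c.w v)
    set b0 : (P0 (c := c) hpos).B ((c.ι.app i).onPos xi.1) :=
      cast (congrArg (P0 (c := c) hpos).B hki) b with hb0def
    set b0' : (P0 (c := c) hpos).B ((c.ι.app j).onPos xj.1) :=
      cast (congrArg (P0 (c := c) hpos).B hkj) b' with hb0'def
    have e1 : (G.map u ≫ leg hG hpos k).onDir xi.1 b = (leg hG hpos i).onDir xi.1 b0 :=
      fun_hcongr (congrArg (P0 (c := c) hpos).B hki)
        (polyHom_onDir_heq (leg_w hG hpos u) xi.1) (cast_heq _ b).symm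
    have e2 : (G.map v ≫ leg hG hpos k).onDir xj.1 b' = (leg hG hpos j).onDir xj.1 b0' :=
      fun_hcongr (congrArg (P0 (c := c) hpos).B hkj)
        (polyHom_onDir_heq (leg_w hG hpos v) xj.1) (cast_heq _ b').symm
    calc xi.2 ((G.map u).onDir xi.1 d)
        = xi.2 ((G.map u ≫ leg hG hpos k).onDir xi.1 b) := by rw [← hb]; rfl
      _ = xi.2 ((leg hG hpos i).onDir xi.1 b0) := by rw [e1]
      _ = xj.2 ((leg hG hpos j).onDir xj.1 b0') := by
          have hfun' : HEq
              (fun b => xi.2 ((leg hG hpos i).onDir xi.1 b) :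
                (P0 (c := c) hpos).B ((c.ι.app i).onPos xi.1) → q.A)
              (fun b => xj.2 ((leg hG hpos j).onDir xj.1 b) :
                (P0 (c := c) hpos).B ((c.ι.app j).onPos xj.1) → q.A) := hfun
          have h1' : (c.ι.app i).onPos xi.1 = (c.ι.app j).onPos xj.1 := h1
          refine fun_hcongr (congrArg (P0 (c := c) hpos).B h1') hfun' ?_
          exact ((cast_heq _ b).trans hbb').trans (cast_heq _ b').symm
      _ = xj.2 ((G.map v ≫ leg hG hpos k).onDir xj.1 b') := by rw [e2]
      _ = xj.2 ((G.map v).onDir xj.1 d') := by rw [← hd']; rfl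

end Mapped

end PolyColimAux

/-- Let `I` be a filtered category and `p : I ⥤ Poly` a diagram all of
whose structure maps are cartesian (i.e. a diagram in `Poly_Cart`).  Then for any
polynomial functor `q`, the canonical map `colim_i (p_i ◁ q) → (colim_i p_i) ◁ q` is an
isomorphism; equivalently, `- ◁ q` sends any colimit cocone of the diagram (taken in
`Poly`) to a colimit cocone. -/
theorem compR_preserves_filtered_cartesian_colimits {I : Type v} [Category.{v} I]
    [IsFiltered I] (F : I ⥤ PolyCart.{u}) (q : PFunctor.{u})
    (c : Cocone (F ⋙ polyCartIncl)) (hc : IsColimit c) :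
    Nonempty (IsColimit ((compR q).mapCocone c)) := by
  have hG : ∀ {i j : I} (u : i ⟶ j), IsCartesian ((F ⋙ polyCartIncl).map u) :=
    fun u => (F.map u).2
  have hpos := PolyColimAux.posIsColimit hc
  have hc₀ := PolyColimAux.c0_isColimit hG hpos
  have hQ : IsColimit ((compR q).mapCocone (PolyColimAux.c0 hG hpos)) :=
    PolyColimAux.isColimitOfCartesian (PolyColimAux.mapped_pos hG hpos q)
      (fun i => PolyColimAux.compR_cartesian q (PolyColimAux.leg_cartesian hG hpos i))
  refine ⟨hQ.ofIsoColimit ?_⟩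
  exact (Cocones.functoriality (F ⋙ polyCartIncl) (compR q)).mapIso
    (Cocones.ext (IsColimit.coconePointUniqueUpToIso hc₀ hc)
      (fun i => IsColimit.comp_coconePointUniqueUpToIso_hom hc₀ hc i))
end
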